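/- arXiv:2601.19159 — 5 statements merged into one kernel-verified Lean document; each statement's English description precedes it below -/
import Mathlib

section
/- For the Young diagram μ = (n, (n−1)^{k−1}) (first row of length n, then k−1 rows of length n−1), the number of standard Young tableaux of shape μ equals k·(kn−k+1)!/(n+k−1) · ∏_{r=1}^{k} (k−r)!/(n+k−r−1)!. -/
/-- Number of cells strictly below cell `(i,j)` (0-indexed) within the first `R` rows of the
Young diagram with row lengths `μ`. -/
def legLen (R : ℕ) (μ : ℕ → ℕ) (i j : ℕ) : ℕ :=
  ((Finset.range R).filter (fun i' => i < i' ∧ j < μ i')).card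

/-- Hook length at cell `(i,j)` (0-indexed). -/
def hookLen (R : ℕ) (μ : ℕ → ℕ) (i j : ℕ) : ℕ :=
  (μ i - j) + legLen R μ i j

/-- Number of standard Young tableaux of the partition with row lengths `μ` and at most `R`
rows, via the hook length formula `N! / ∏ hooks`. -/
def dimSYT (R : ℕ) (μ : ℕ → ℕ) : ℚ :=
  ((∑ i ∈ Finset.range R, μ i).factorial : ℚ) /
    ∏ i ∈ Finset.range R, ∏ j ∈ Finset.range (μ i), (hookLen R μ i j : ℚ)

lemma leg_eq (m k i j : ℕ) :
    legLen k (fun i => if i = 0 then m + 1 else m) i j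
      = if j < m then k - (i+1) else 0 := by
  unfold legLen
  split_ifs with h
  · rw [show ((Finset.range k).filter (fun i' => i < i' ∧ j < if i' = 0 then m + 1 else m))
        = Finset.Ico (i+1) k from ?_]
    · simp
    · ext i'
      rcases eq_or_ne i' 0 with h0 | h0 <;>
        simp [h0, Finset.mem_Ico] <;> omega
  · rw [Finset.filter_eq_empty_iff.2, Finset.card_empty]
    intro i' _
    rcases eq_or_ne i' 0 with h0 | h0 <;> simp [h0] <;> omega

lemma row0_prod (m k : ℕ) (hk : 1 ≤ k) :
    ∏ j ∈ Finset.range (m+1), hookLen k (fun i => if i = 0 then m + 1 else m) 0 j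
      = (m + k).descFactorial m := by
  rw [Finset.prod_range_succ, Nat.descFactorial_eq_prod_range]
  have hlast : hookLen k (fun i => if i = 0 then m + 1 else m) 0 m = 1 := by
    unfold hookLen
    rw [leg_eq]
    simp
  rw [hlast, mul_one]
  apply Finset.prod_congr rfl
  intro j hj
  simp only [Finset.mem_range] at hj
  simp only [hookLen, leg_eq, if_pos hj, reduceIte]
  omega

lemma rowi_prod (m k i : ℕ) (hi : 1 ≤ i) (hik : i < k) :
    ∏ j ∈ Finset.range m, hookLen k (fun i => if i = 0 then m + 1 else m) i j
      = (m + k - 1 - i).descFactorial m := by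
  rw [Nat.descFactorial_eq_prod_range]
  apply Finset.prod_congr rfl
  intro j hj
  simp only [Finset.mem_range] at hj
  simp only [hookLen, leg_eq, if_pos hj, if_neg (show ¬ i = 0 by omega)]
  omega

lemma sum_mu (m k : ℕ) (hk : 1 ≤ k) :
    ∑ i ∈ Finset.range k, (if i = 0 then m + 1 else m) = k * (m+1) - k + 1 := by
  have h : ∀ i, (if i = 0 then m + 1 else m) = m + (if i = 0 then 1 else 0) := by
    intro i; split <;> omega
  simp_rw [h]
  rw [Finset.sum_add_distrib, Finset.sum_const, Finset.sum_ite_eq' (Finset.range k) 0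
    (fun _ => 1), if_pos (by simp only [Finset.mem_range]; omega), Finset.card_range, smul_eq_mul, Nat.mul_succ]
  omega

lemma descF_ne_zero {m a : ℕ} (h : m ≤ a) : a.descFactorial m ≠ 0 := by
  intro h0
  have h1 := Nat.factorial_mul_descFactorial h
  rw [h0, mul_zero] at h1
  exact (Nat.factorial_ne_zero a) h1.symm

/-- for `μ = (n,(n−1)^{k−1})`, the number of standard Young tableaux of shape μ
equals `k(kn−k+1)!/(n+k−1) · ∏_{r=1}^{k}(k−r)!/(n+k−r−1)!`. -/
theorem dimSpecht_nearRectangle (n k : ℕ) (hn : 1 ≤ n) (hk : 1 ≤ k) :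
    dimSYT k (fun i => if i = 0 then n else n - 1)
      = (k : ℚ) * ((k * n - k + 1).factorial : ℚ) / ((n + k - 1 : ℕ) : ℚ) *
        ∏ r ∈ Finset.Icc 1 k, ((k - r).factorial : ℚ) / ((n + k - r - 1).factorial : ℚ) := by
  obtain ⟨m, rfl⟩ : ∃ m, n = m + 1 := ⟨n - 1, by omega⟩
  obtain ⟨K, rfl⟩ : ∃ K, k = K + 1 := ⟨k - 1, by omega⟩
  unfold dimSYT
  simp only [Nat.add_sub_cancel]
  rw [sum_mu m (K+1) (by omega)]
  set N := (K+1) * (m+1) - (K+1) + 1 with hN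
  have hsplit : (∏ i ∈ Finset.range (K+1), ∏ j ∈ Finset.range
      ((fun i => if i = 0 then m + 1 else m) i),
      (hookLen (K+1) (fun i => if i = 0 then m + 1 else m) i j : ℚ))
      = ((m + K + 1).descFactorial m : ℚ) *
        ∏ i ∈ Finset.range K, ((m + K - 1 - i).descFactorial m : ℚ) := by
    rw [Finset.prod_range_succ']
    simp only [reduceIte]
    rw [mul_comm]
    congr 1
    · rw [← Nat.cast_prod, row0_prod m (K+1) (by omega)]
      congr 2 <;> omega
    · apply Finset.prod_congr rfl
      intro i hi
      simp only [Finset.mem_range] at hi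
      simp only [if_neg (by omega : ¬ i + 1 = 0)]
      rw [← Nat.cast_prod, rowi_prod m (K+1) (i+1) (by omega) (by omega)]
      congr 2 <;> omega
  rw [hsplit]
  have hIcc : (∏ r ∈ Finset.Icc 1 (K+1),
        ((K + 1 - r).factorial : ℚ) / ((m + 1 + (K+1) - r - 1).factorial : ℚ))
      = ((K.factorial : ℚ) / ((m + K).factorial : ℚ)) *
        ∏ r ∈ Finset.range K, (((K - 1 - r).factorial : ℚ) /
          ((m + K - 1 - r).factorial : ℚ)) := by
    rw [show Finset.Icc 1 (K+1) = Finset.Ico 1 (K+2) by rfl, Finset.prod_Ico_eq_prod_range]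
    simp only [show K + 2 - 1 = K + 1 from rfl]
    rw [Finset.prod_range_succ']
    rw [mul_comm]
    congr 1
    · congr 3 <;> omega
    · apply Finset.prod_congr rfl
      intro r hr
      congr 3 <;> omega
  rw [hIcc]
  have hQ : (∏ i ∈ Finset.range K, ((m + K - 1 - i).descFactorial m : ℚ))⁻¹
      = ∏ r ∈ Finset.range K, (((K - 1 - r).factorial : ℚ) /
          ((m + K - 1 - r).factorial : ℚ)) := by
    rw [← Finset.prod_inv_distrib]
    apply Finset.prod_congr rfl
    intro r hr
    simp only [Finset.mem_range] at hr
    have hle : m ≤ m + K - 1 - r := by omega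
    have hdf := Nat.factorial_mul_descFactorial hle
    rw [show m + K - 1 - r - m = K - 1 - r by omega] at hdf
    have hfac : ((m + K - 1 - r).factorial : ℚ) ≠ 0 :=
      Nat.cast_ne_zero.2 (Nat.factorial_ne_zero _)
    have hne : (((m + K - 1 - r).descFactorial m : ℕ) : ℚ) ≠ 0 :=
      Nat.cast_ne_zero.2 (descF_ne_zero hle)
    rw [eq_div_iff hfac, inv_mul_eq_div, div_eq_iff hne]
    exact_mod_cast hdf.symm
  rw [← hQ]
  set Q : ℚ := ∏ i ∈ Finset.range K, ((m + K - 1 - i).descFactorial m : ℚ) with hQdef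
  have hQne : Q ≠ 0 := by
    rw [hQdef]
    apply Finset.prod_ne_zero_iff.2
    intro i hi
    simp only [Finset.mem_range] at hi
    exact Nat.cast_ne_zero.2 (descF_ne_zero (by omega : m ≤ m + K - 1 - i))
  have hD0 : ((K+1).factorial : ℚ) * ((m + K + 1).descFactorial m : ℚ)
      = ((m + K + 1).factorial : ℚ) := by
    have h1 := Nat.factorial_mul_descFactorial (show m ≤ m + K + 1 by omega)
    rw [show m + K + 1 - m = K + 1 by omega] at h1
    exact_mod_cast h1
  have hD0ne : ((m + K + 1).descFactorial m : ℚ) ≠ 0 :=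
    Nat.cast_ne_zero.2 (descF_ne_zero (by omega))
  have hD0' : ((K:ℚ)+1) * (K.factorial : ℚ) * ((m + K + 1).descFactorial m : ℚ)
      = ((m:ℚ)+K+1) * ((m + K).factorial : ℚ) := by
    rw [show ((K:ℚ)+1) * (K.factorial : ℚ) = ((K+1).factorial : ℚ) by
        push_cast [Nat.factorial_succ]; ring,
      hD0, show ((m+K+1).factorial : ℚ) = ((m+K+1:ℕ):ℚ) * ((m + K).factorial : ℚ) by
        exact_mod_cast congrArg (Nat.cast (R := ℚ)) (Nat.factorial_succ (m + K))]
    push_cast; ring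
  have hcast : ((m + 1 + (K + 1) - 1 : ℕ) : ℚ) = ((m:ℚ) + K + 1) := by
    push_cast [show m + 1 + (K + 1) - 1 = m + K + 1 by omega]; ring
  rw [hcast]
  have hmk : ((m:ℚ) + K + 1) ≠ 0 := by positivity
  have hKfac : (K.factorial : ℚ) ≠ 0 := Nat.cast_ne_zero.2 (Nat.factorial_ne_zero _)
  have hmKfac : ((m + K).factorial : ℚ) ≠ 0 := Nat.cast_ne_zero.2 (Nat.factorial_ne_zero _)
  field_simp
  push_cast
  linear_combination (-1 : ℚ) * hD0'
end

section
/- The ratio of the number of standard Young tableaux of shape ((n−1)^k) to the number of standard Young tableaux of shape (n,(n−1)^{k−1}) equals (n+k−1)/(k(kn−k+1)). -/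
lemma filter_pos_card (K : ℕ) :
    ((Finset.range (K+1)).filter (fun i => 0 < i)).card = K := by
  have h : (Finset.range (K+1)).filter (fun i => 0 < i) = (Finset.range (K+1)).erase 0 := by
    ext x
    simp [Nat.pos_iff_ne_zero, and_comm]
  rw [h, Finset.card_erase_of_mem (by simp), Finset.card_range]
  omega

lemma desc_id (K m : ℕ) :
    (K+1) * (m+K+1).descFactorial m = (m+K+1) * (m+K).descFactorial m := by
  have h1 : (m+K+1).descFactorial (m+1) = (m+K+1) * (m+K).descFactorial m :=
    Nat.succ_descFactorial_succ (m+K) m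
  have h2 : (m+K+1).descFactorial (m+1) = (K+1) * (m+K+1).descFactorial m := by
    rw [Nat.descFactorial_succ]
    congr 1
    omega
  rw [← h2, h1]

lemma legLen_row0 (K m j : ℕ) (μ : ℕ → ℕ) (h : ∀ i, 0 < i → μ i = m) (hj : j < m) :
    legLen (K+1) μ 0 j = K := by
  unfold legLen
  have : (Finset.range (K+1)).filter (fun i' => 0 < i' ∧ j < μ i')
      = (Finset.range (K+1)).filter (fun i => 0 < i) := by
    apply Finset.filter_congr
    intro x _
    constructor
    · rintro ⟨h1, _⟩; exact h1
    · intro h1; exact ⟨h1, by rw [h x h1]; exact hj⟩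
  rw [this, filter_pos_card]

lemma hookLen_congr (R : ℕ) (μ ν : ℕ → ℕ) (i j : ℕ) (hi : 0 < i)
    (h : ∀ x, 0 < x → μ x = ν x) : hookLen R μ i j = hookLen R ν i j := by
  unfold hookLen legLen
  rw [h i hi]
  congr 1
  apply congrArg
  apply Finset.filter_congr
  intro x _
  by_cases hxi : i < x
  · rw [h x (by omega)]
  · simp [hxi]

/-- `f^{((n−1)^k)} / f^{(n,(n−1)^{k−1})} = (n+k−1)/(k(kn−k+1))`. -/
theorem dimSpecht_ratio (n k : ℕ) (hn : 1 ≤ n) (hk : 1 ≤ k) :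
    dimSYT k (fun _ => n - 1) / dimSYT k (fun i => if i = 0 then n else n - 1)
      = ((n + k - 1 : ℕ) : ℚ) / ((k * (k * n - k + 1) : ℕ) : ℚ) := by
  obtain ⟨m, rfl⟩ : ∃ m, n = m + 1 := ⟨n - 1, by omega⟩
  obtain ⟨K, rfl⟩ : ∃ K, k = K + 1 := ⟨k - 1, by omega⟩
  simp only [Nat.add_sub_cancel]
  set μ : ℕ → ℕ := fun _ => m with hμ
  set ν : ℕ → ℕ := fun i => if i = 0 then m + 1 else m with hν
  have hν0 : ν 0 = m + 1 := rfl
  have hνpos : ∀ x, 0 < x → μ x = ν x := by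
    intro x hx
    simp [hμ, hν, Nat.pos_iff_ne_zero.mp hx]
  -- sums
  have hsum1 : ∑ i ∈ Finset.range (K+1), μ i = (K+1) * m := by
    simp [hμ, mul_comm]
  have hsum2 : ∑ i ∈ Finset.range (K+1), ν i = (K+1) * m + 1 := by
    rw [Finset.sum_range_succ']
    simp only [hν, if_pos rfl, Nat.succ_ne_zero, if_neg]
    simp [Finset.sum_const]
    ring
  -- tail product
  set T : ℚ := ∏ i ∈ Finset.range K, ∏ j ∈ Finset.range m, (hookLen (K+1) μ (i+1) j : ℚ)
    with hT
  have hTν : ∏ i ∈ Finset.range K, ∏ j ∈ Finset.range (ν (i+1)), (hookLen (K+1) ν (i+1) j : ℚ)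
      = T := by
    apply Finset.prod_congr rfl
    intro i _
    have h1 : ν (i+1) = m := by simp [hν]
    rw [h1]
    apply Finset.prod_congr rfl
    intro j _
    rw [hookLen_congr (K+1) μ ν (i+1) j (Nat.succ_pos i) hνpos]
  -- row 0 products
  have hrow0μ : ∏ j ∈ Finset.range (μ 0), (hookLen (K+1) μ 0 j : ℚ)
      = ((m+K).descFactorial m : ℚ) := by
    rw [Nat.descFactorial_eq_prod_range, Nat.cast_prod]
    apply Finset.prod_congr rfl
    intro j hj
    simp only [Finset.mem_range] at hj
    simp only [hμ] at hj
    have hl : legLen (K+1) μ 0 j = K := legLen_row0 K m j μ (fun _ _ => rfl) hj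
    congr 1
    unfold hookLen
    rw [hl]
    simp only [hμ]
    omega
  have hrow0ν : ∏ j ∈ Finset.range (ν 0), (hookLen (K+1) ν 0 j : ℚ)
      = ((m+K+1).descFactorial m : ℚ) := by
    rw [hν0, Finset.prod_range_succ]
    have hlast : hookLen (K+1) ν 0 m = 1 := by
      unfold hookLen legLen
      have he : (Finset.range (K+1)).filter (fun i' => 0 < i' ∧ m < ν i') = ∅ := by
        apply Finset.filter_eq_empty_iff.mpr
        intro x _
        rintro ⟨hx, hm⟩
        rw [← hνpos x hx] at hm
        exact absurd hm (by simp [hμ])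
      rw [he, hν0]
      simp
    rw [hlast, Nat.descFactorial_eq_prod_range, Nat.cast_prod, Nat.cast_one, mul_one]
    apply Finset.prod_congr rfl
    intro j hj
    simp only [Finset.mem_range] at hj
    have hl : legLen (K+1) ν 0 j = K := by
      apply legLen_row0 K m j ν _ hj
      intro i hi
      simp [hν, Nat.pos_iff_ne_zero.mp hi]
    congr 1
    unfold hookLen
    rw [hl, hν0]
    omega
  -- put dimSYT in closed form
  have hd1 : dimSYT (K+1) μ = (((K+1)*m).factorial : ℚ) / (T * ((m+K).descFactorial m : ℚ)) := by
    unfold dimSYT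
    rw [hsum1, Finset.prod_range_succ']
    rw [hrow0μ]
  have hd2 : dimSYT (K+1) ν
      = ((((K+1)*m+1).factorial : ℚ)) / (T * ((m+K+1).descFactorial m : ℚ)) := by
    unfold dimSYT
    rw [hsum2, Finset.prod_range_succ', hrow0ν, hTν]
  rw [hd1, hd2]
  -- nonvanishing facts
  have hT0 : T ≠ 0 := by
    rw [hT]
    apply Finset.prod_ne_zero_iff.mpr
    intro i _
    apply Finset.prod_ne_zero_iff.mpr
    intro j hj
    simp only [Finset.mem_range] at hj
    have : 0 < hookLen (K+1) μ (i+1) j := by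
      unfold hookLen
      have : 0 < (μ (i+1) : ℕ) - j := by simp only [hμ]; omega
      omega
    exact_mod_cast this.ne'
  have hD1 : ((m+K).descFactorial m : ℚ) ≠ 0 := by
    have : (m+K).descFactorial m ≠ 0 := by
      rw [Ne, Nat.descFactorial_eq_zero_iff_lt]
      omega
    exact_mod_cast this
  have hD2 : ((m+K+1).descFactorial m : ℚ) ≠ 0 := by
    have : (m+K+1).descFactorial m ≠ 0 := by
      rw [Ne, Nat.descFactorial_eq_zero_iff_lt]
      omega
    exact_mod_cast this
  have hF1 : (((K+1)*m).factorial : ℚ) ≠ 0 := by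
    exact_mod_cast ((K+1)*m).factorial_ne_zero
  have hfact : ((((K+1)*m+1).factorial : ℕ) : ℚ)
      = (((K+1)*m+1 : ℕ) : ℚ) * (((K+1)*m).factorial : ℚ) := by
    rw [Nat.factorial_succ]
    push_cast
    ring
  have hkey : ((K:ℚ)+1) * ((m+K+1).descFactorial m : ℚ)
      = ((m:ℚ)+K+1) * ((m+K).descFactorial m : ℚ) := by
    have := desc_id K m
    exact_mod_cast this
  have hRHS1 : m + 1 + (K + 1) - 1 = m + K + 1 := by omega
  have hRHS2 : (K + 1) * ((K + 1) * (m + 1) - (K + 1) + 1) = (K+1) * ((K+1)*m + 1) := by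
    have hin : (K + 1) * (m + 1) - (K + 1) + 1 = (K+1)*m + 1 := by
      have : (K + 1) * (m + 1) = (K+1)*m + (K+1) := by ring
      omega
    rw [hin]
  have hAne : ((((K+1)*m+1 : ℕ)) : ℚ) ≠ 0 := by positivity
  have hred : ∀ (F t d1 d2 A : ℚ), t ≠ 0 → d1 ≠ 0 → d2 ≠ 0 → F ≠ 0 → A ≠ 0 →
      (F/(t*d1)) / (A*F/(t*d2)) = d2/(d1*A) := by
    intro F t d1 d2 A h1 h2 h3 h4 h5
    field_simp
  rw [hRHS1, hRHS2, hfact, hred _ _ _ _ _ hT0 hD1 hD2 hF1 hAne]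
  push_cast
  rw [div_eq_div_iff (by positivity) (by positivity)]
  linear_combination (((K:ℚ)+1)*m+1) * hkey
end

section
/- Let C(n,k) = d·(k(d+n−1)/(k+n−1))·∏_{r=1}^{k} (d+n−r−1)!(k−r)!/((k+n−r−1)!(d−r)!) for 1 ≤ k ≤ d. If k + k' = d with 1 ≤ k' ≤ k ≤ d, then lim_{n→∞} C(n,k)/C(n,k') = k/(d−k). -/
/-- SDP complexity of the rectangular scheme: `C(n,k) = d · (k(d+n−1)/(k+n−1)) ·
∏_{r=1}^{k} (d+n−r−1)!(k−r)!/((k+n−r−1)!(d−r)!)`, i.e. `d · dim 𝕌^d_{(n,(n−1)^{k−1})}`. -/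
noncomputable def CC (d k n : ℕ) : ℝ :=
  (d : ℝ) * (((k * (d + n - 1) : ℕ) : ℝ) / ((k + n - 1 : ℕ) : ℝ)) *
    ∏ r ∈ Finset.Icc 1 k,
      (((d + n - r - 1).factorial : ℝ) * ((k - r).factorial : ℝ)) /
        (((k + n - r - 1).factorial : ℝ) * ((d - r).factorial : ℝ))

open Finset

private lemma prod_Icc_add_split {M : Type*} [CommMonoid M] (f : ℕ → M) (a b : ℕ) :
    ∏ r ∈ Finset.Icc 1 (a + b), f r
      = (∏ r ∈ Finset.Icc 1 a, f r) * ∏ r ∈ Finset.Icc 1 b, f (a + r) := by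
  rw [← Finset.Ico_add_one_right_eq_Icc, ← Finset.Ico_add_one_right_eq_Icc, ← Finset.Ico_add_one_right_eq_Icc,
    Finset.prod_Ico_eq_prod_range, Finset.prod_Ico_eq_prod_range,
    Finset.prod_Ico_eq_prod_range]
  simp only [Nat.add_sub_cancel]
  rw [Finset.prod_range_add]
  refine congrArg _ (Finset.prod_congr rfl fun r _ => ?_)
  congr 1
  omega

private lemma key_prod_eq (k k' n : ℕ) :
    (∏ r ∈ Finset.Icc 1 k, (k + k' + n - r - 1).factorial * (k - r).factorial)
      * (∏ r ∈ Finset.Icc 1 k', (k' + n - r - 1).factorial * (k + k' - r).factorial)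
    = (∏ r ∈ Finset.Icc 1 k', (k + k' + n - r - 1).factorial * (k' - r).factorial)
      * (∏ r ∈ Finset.Icc 1 k, (k + n - r - 1).factorial * (k + k' - r).factorial) := by
  simp only [Finset.prod_mul_distrib]
  have s2 : ∀ g : ℕ → ℕ, ∏ r ∈ Finset.Icc 1 (k + k'), g r
      = (∏ r ∈ Finset.Icc 1 k', g r) * ∏ r ∈ Finset.Icc 1 k, g (k' + r) := by
    intro g
    rw [add_comm k k']
    exact prod_Icc_add_split g k' k
  have e1 : (∏ r ∈ Finset.Icc 1 k, (k + k' + n - r - 1).factorial)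
      * (∏ r ∈ Finset.Icc 1 k', (k' + n - r - 1).factorial)
      = ∏ r ∈ Finset.Icc 1 (k + k'), (k + k' + n - r - 1).factorial := by
    rw [prod_Icc_add_split (fun r => (k + k' + n - r - 1).factorial) k k']
    refine congrArg _ (Finset.prod_congr rfl fun r hr => ?_)
    simp only [Finset.mem_Icc] at hr
    congr 1
    omega
  have e2 : (∏ r ∈ Finset.Icc 1 k', (k + k' + n - r - 1).factorial)
      * (∏ r ∈ Finset.Icc 1 k, (k + n - r - 1).factorial)
      = ∏ r ∈ Finset.Icc 1 (k + k'), (k + k' + n - r - 1).factorial := by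
    rw [s2 (fun r => (k + k' + n - r - 1).factorial)]
    refine congrArg _ (Finset.prod_congr rfl fun r hr => ?_)
    simp only [Finset.mem_Icc] at hr
    congr 1
    omega
  have e3 : (∏ r ∈ Finset.Icc 1 k, (k - r).factorial)
      * (∏ r ∈ Finset.Icc 1 k', (k + k' - r).factorial)
      = ∏ r ∈ Finset.Icc 1 (k + k'), (k + k' - r).factorial := by
    rw [s2 (fun r => (k + k' - r).factorial), mul_comm]
    refine congrArg _ (Finset.prod_congr rfl fun r hr => ?_)
    simp only [Finset.mem_Icc] at hr
    congr 1
    omega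
  have e4 : (∏ r ∈ Finset.Icc 1 k', (k' - r).factorial)
      * (∏ r ∈ Finset.Icc 1 k, (k + k' - r).factorial)
      = ∏ r ∈ Finset.Icc 1 (k + k'), (k + k' - r).factorial := by
    rw [prod_Icc_add_split (fun r => (k + k' - r).factorial) k k', mul_comm]
    refine congrArg _ (Finset.prod_congr rfl fun r hr => ?_)
    simp only [Finset.mem_Icc] at hr
    congr 1
    omega
  calc (∏ r ∈ Finset.Icc 1 k, (k + k' + n - r - 1).factorial)
        * (∏ r ∈ Finset.Icc 1 k, (k - r).factorial)
        * ((∏ r ∈ Finset.Icc 1 k', (k' + n - r - 1).factorial)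
          * (∏ r ∈ Finset.Icc 1 k', (k + k' - r).factorial))
      = ((∏ r ∈ Finset.Icc 1 k, (k + k' + n - r - 1).factorial)
          * (∏ r ∈ Finset.Icc 1 k', (k' + n - r - 1).factorial))
        * ((∏ r ∈ Finset.Icc 1 k, (k - r).factorial)
          * (∏ r ∈ Finset.Icc 1 k', (k + k' - r).factorial)) := by ring
    _ = (∏ r ∈ Finset.Icc 1 (k + k'), (k + k' + n - r - 1).factorial)
        * (∏ r ∈ Finset.Icc 1 (k + k'), (k + k' - r).factorial) := by rw [e1, e3]
    _ = ((∏ r ∈ Finset.Icc 1 k', (k + k' + n - r - 1).factorial)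
          * (∏ r ∈ Finset.Icc 1 k, (k + n - r - 1).factorial))
        * ((∏ r ∈ Finset.Icc 1 k', (k' - r).factorial)
          * (∏ r ∈ Finset.Icc 1 k, (k + k' - r).factorial)) := by rw [e2, e4]
    _ = _ := by ring

private lemma CC_eq (d j n : ℕ) :
    CC d j n = (d : ℝ) * (((j * (d + n - 1) : ℕ) : ℝ) / ((j + n - 1 : ℕ) : ℝ)) *
      (((∏ r ∈ Finset.Icc 1 j, (d + n - r - 1).factorial * (j - r).factorial : ℕ) : ℝ)
        / ((∏ r ∈ Finset.Icc 1 j, (j + n - r - 1).factorial * (d - r).factorial : ℕ) : ℝ)) := by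
  unfold CC
  congr 1
  rw [Finset.prod_div_distrib]
  push_cast
  rfl

private lemma CC_ratio (d k k' n : ℕ) (hd : 2 ≤ d) (hk' : 1 ≤ k') (hkk : k' ≤ k)
    (hsum : k + k' = d) (hn : 1 ≤ n) :
    CC d k n / CC d k' n = ((k : ℝ) * ((k' : ℝ) + n - 1)) / ((k' : ℝ) * ((k : ℝ) + n - 1)) := by
  subst hsum
  have hk1 : 1 ≤ k := hk'.trans hkk
  have hNk' : 0 < ∏ r ∈ Finset.Icc 1 k', (k + k' + n - r - 1).factorial * (k' - r).factorial :=
    Finset.prod_pos fun r _ => Nat.mul_pos (Nat.factorial_pos _) (Nat.factorial_pos _)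
  have hDk' : 0 < ∏ r ∈ Finset.Icc 1 k', (k' + n - r - 1).factorial * (k + k' - r).factorial :=
    Finset.prod_pos fun r _ => Nat.mul_pos (Nat.factorial_pos _) (Nat.factorial_pos _)
  have hDk : 0 < ∏ r ∈ Finset.Icc 1 k, (k + n - r - 1).factorial * (k + k' - r).factorial :=
    Finset.prod_pos fun r _ => Nat.mul_pos (Nat.factorial_pos _) (Nat.factorial_pos _)
  have hx : ((∏ r ∈ Finset.Icc 1 k, (k + k' + n - r - 1).factorial * (k - r).factorial : ℕ) : ℝ)
        / ((∏ r ∈ Finset.Icc 1 k, (k + n - r - 1).factorial * (k + k' - r).factorial : ℕ) : ℝ)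
      = ((∏ r ∈ Finset.Icc 1 k', (k + k' + n - r - 1).factorial * (k' - r).factorial : ℕ) : ℝ)
        / ((∏ r ∈ Finset.Icc 1 k', (k' + n - r - 1).factorial * (k + k' - r).factorial : ℕ) : ℝ) := by
    rw [div_eq_div_iff (by exact_mod_cast hDk.ne') (by exact_mod_cast hDk'.ne')]
    exact_mod_cast key_prod_eq k k' n
  rw [CC_eq, CC_eq, hx]
  have h1 : ((k + k' + n - 1 : ℕ) : ℝ) = (k : ℝ) + k' + n - 1 := by
    rw [Nat.cast_sub (by omega)]; push_cast; ring
  have h2 : ((k + n - 1 : ℕ) : ℝ) = (k : ℝ) + n - 1 := by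
    rw [Nat.cast_sub (by omega)]; push_cast; ring
  have h3 : ((k' + n - 1 : ℕ) : ℝ) = (k' : ℝ) + n - 1 := by
    rw [Nat.cast_sub (by omega)]; push_cast; ring
  have hkR : (1 : ℝ) ≤ (k : ℝ) := by exact_mod_cast hk1
  have hk'R : (1 : ℝ) ≤ (k' : ℝ) := by exact_mod_cast hk'
  have hnR : (1 : ℝ) ≤ (n : ℝ) := by exact_mod_cast hn
  have hA : (k : ℝ) + k' + n - 1 ≠ 0 := by nlinarith
  have hB : (k : ℝ) + n - 1 ≠ 0 := by nlinarith
  have hC : (k' : ℝ) + n - 1 ≠ 0 := by nlinarith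
  have hk0 : (k : ℝ) ≠ 0 := by nlinarith
  have hk'0 : (k' : ℝ) ≠ 0 := by nlinarith
  have hd0 : (k : ℝ) + (k' : ℝ) ≠ 0 := by nlinarith
  have hN0 : ((∏ r ∈ Finset.Icc 1 k', (k + k' + n - r - 1).factorial * (k' - r).factorial : ℕ) : ℝ) ≠ 0 := by
    exact_mod_cast hNk'.ne'
  have hD0 : ((∏ r ∈ Finset.Icc 1 k', (k' + n - r - 1).factorial * (k + k' - r).factorial : ℕ) : ℝ) ≠ 0 := by
    exact_mod_cast hDk'.ne'
  push_cast [h1, h2, h3]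
  field_simp

/-- if `k + k′ = d` with `1 ≤ k′ ≤ k ≤ d`, then
`lim_{n→∞} C(n,k)/C(n,k′) = k/(d−k)`. -/
theorem complexity_ratio_limit (d k k' : ℕ) (hd : 2 ≤ d) (hk' : 1 ≤ k') (hkk : k' ≤ k)
    (hkd : k ≤ d) (hsum : k + k' = d) :
    Filter.Tendsto (fun n : ℕ => CC d k n / CC d k' n) Filter.atTop
      (nhds ((k : ℝ) / ((d : ℝ) - (k : ℝ)))) := by
  have hk1 : 1 ≤ k := hk'.trans hkk
  have hk'0 : (k' : ℝ) ≠ 0 := by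
    have : (0 : ℝ) < k' := by exact_mod_cast hk'
    exact this.ne'
  have hk0 : (k : ℝ) ≠ 0 := by
    have : (0 : ℝ) < k := by exact_mod_cast hk1
    exact this.ne'
  have hdk : (d : ℝ) - (k : ℝ) = (k' : ℝ) := by
    have : ((k + k' : ℕ) : ℝ) = (d : ℕ) := by exact_mod_cast congrArg (Nat.cast (R := ℝ)) hsum
    push_cast at this
    linarith
  rw [hdk]
  -- the limit of the simplified ratio
  have h1 : Filter.Tendsto (fun n : ℕ => ((k : ℝ) - 1) / n) Filter.atTop (nhds 0) :=
    tendsto_const_div_atTop_nhds_zero_nat _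
  have h2 : Filter.Tendsto (fun n : ℕ => ((k' : ℝ) - 1) / n) Filter.atTop (nhds 0) :=
    tendsto_const_div_atTop_nhds_zero_nat _
  have hnum : Filter.Tendsto (fun n : ℕ => (k : ℝ) * (1 + ((k' : ℝ) - 1) / n))
      Filter.atTop (nhds ((k : ℝ) * (1 + 0))) :=
    (tendsto_const_nhds.add h2).const_mul _
  have hden : Filter.Tendsto (fun n : ℕ => (k' : ℝ) * (1 + ((k : ℝ) - 1) / n))
      Filter.atTop (nhds ((k' : ℝ) * (1 + 0))) :=
    (tendsto_const_nhds.add h1).const_mul _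
  have hden0 : (k' : ℝ) * (1 + 0) ≠ 0 := by simpa using hk'0
  have hlim : Filter.Tendsto
      (fun n : ℕ => ((k : ℝ) * (1 + ((k' : ℝ) - 1) / n)) / ((k' : ℝ) * (1 + ((k : ℝ) - 1) / n)))
      Filter.atTop (nhds ((k : ℝ) / (k' : ℝ))) := by
    have := hnum.div hden hden0
    simp only [add_zero, mul_one] at this
    exact this
  refine hlim.congr' ?_
  filter_upwards [Filter.eventually_ge_atTop 1] with n hn
  rw [CC_ratio d k k' n hd hk' hkk hsum hn]
  have hnR : (1 : ℝ) ≤ (n : ℝ) := by exact_mod_cast hn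
  have hn0 : (n : ℝ) ≠ 0 := by linarith
  have hkR : (1 : ℝ) ≤ (k : ℝ) := by exact_mod_cast hk1
  have hk'R : (1 : ℝ) ≤ (k' : ℝ) := by exact_mod_cast hk'
  have hB : (k : ℝ) + n - 1 ≠ 0 := by nlinarith
  have hD : (1 : ℝ) + ((k : ℝ) - 1) / n ≠ 0 := by
    have h0 : (0 : ℝ) ≤ ((k : ℝ) - 1) / n := div_nonneg (by linarith) (by linarith)
    nlinarith
  rw [div_eq_div_iff (mul_ne_zero hk'0 hD) (mul_ne_zero hk'0 hB)]
  field_simp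
  ring
end

section
/- In particular, for 1 ≤ k ≤ d and n ≥ 1, dim 𝕌^d_{(n,(n−1)^{k−1})} = dim 𝕌^d_{(n^{d−k},1^{k−1})}. -/
/-- Dimension of the irreducible polynomial representation of `U(d)`/`GL_d` with highest
weight the partition with row lengths `μ` (at most `R ≤ d` rows), via the formula
`∏_{(i,j)∈μ} (d+j−i)/h_μ(i,j)` (0-indexed cells, so the content is `d + j − i`). -/
def dimGL (d R : ℕ) (μ : ℕ → ℕ) : ℚ :=
  ∏ i ∈ Finset.range R, ∏ j ∈ Finset.range (μ i),
    ((d + j - i : ℕ) : ℚ) / (hookLen R μ i j : ℚ)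

def ascQ (a m : ℕ) : ℚ := ∏ j ∈ Finset.range m, ((a : ℚ) + j)

lemma ascQ_pos (a m : ℕ) (ha : 1 ≤ a) : 0 < ascQ a m := by
  apply Finset.prod_pos
  intro j _
  have h1 : (1:ℚ) ≤ (a:ℚ) := by exact_mod_cast ha
  have h2 : (0:ℚ) ≤ (j:ℚ) := by positivity
  linarith

lemma ascQ_ne (a m : ℕ) (ha : 1 ≤ a) : ascQ a m ≠ 0 := ne_of_gt (ascQ_pos a m ha)

lemma ascQ_succ (a m : ℕ) : ascQ a (m+1) = ascQ a m * ((a:ℚ) + m) := by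
  unfold ascQ; rw [Finset.prod_range_succ]

lemma ascQ_succ' (a m : ℕ) : ascQ a (m+1) = ascQ (a+1) m * (a:ℚ) := by
  unfold ascQ
  rw [Finset.prod_range_succ']
  congr 1
  · exact Finset.prod_congr rfl fun j _ => by push_cast; ring
  · simp

lemma ascQ_key (a m : ℕ) : ((a:ℚ) + m) * ascQ a m = (a:ℚ) * ascQ (a+1) m := by
  induction m with
  | zero => simp [ascQ]
  | succ m ih =>
      rw [ascQ_succ a m, ascQ_succ (a+1) m]
      push_cast
      have : ((a:ℚ) + (m+1)) * (ascQ a m * ((a:ℚ)+m)) =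
          (((a:ℚ)+m) * ascQ a m) * ((a:ℚ)+m+1) := by ring
      rw [this, ih]
      ring

lemma prod_reflect_eq (m : ℕ) (f g : ℕ → ℚ) (h : ∀ j < m, f (m - 1 - j) = g j) :
    ∏ j ∈ Finset.range m, f j = ∏ j ∈ Finset.range m, g j := by
  rw [← Finset.prod_range_reflect]
  exact Finset.prod_congr rfl fun j hj => h j (Finset.mem_range.mp hj)

lemma legLen_eq (R : ℕ) (μ : ℕ → ℕ) (i j a b : ℕ)
    (h : ∀ i', (i' < R ∧ i < i' ∧ j < μ i') ↔ (a ≤ i' ∧ i' < b)) :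
    legLen R μ i j = b - a := by
  unfold legLen
  rw [show (Finset.range R).filter (fun i' => i < i' ∧ j < μ i') = Finset.Ico a b by
    ext x
    simp only [Finset.mem_filter, Finset.mem_range, Finset.mem_Ico]
    exact h x]
  exact Nat.card_Ico a b

section hooks
variable (m c e : ℕ)

lemma hookL_0 (j : ℕ) (hj : j < m) :
    hookLen (c+1) (fun i => if i = 0 then m+1 else m) 0 j = m+1-j+c := by
  unfold hookLen
  rw [legLen_eq _ _ _ _ 1 (c+1)
    (by intro i'; constructor
        · rintro ⟨h1, h2, _⟩; omega
        · rintro ⟨h1, h2⟩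
          refine ⟨h2, h1, ?_⟩
          rw [if_neg (by omega)]; exact hj)]
  simp

lemma hookL_last :
    hookLen (c+1) (fun i => if i = 0 then m+1 else m) 0 m = 1 := by
  unfold hookLen
  rw [legLen_eq _ _ _ _ 0 0
    (by intro i'; constructor
        · rintro ⟨h1, h2, h3⟩
          rw [if_neg (by omega)] at h3; omega
        · omega)]
  simp

lemma hookL_row (i j : ℕ) (hi : i < c) (hj : j < m) :
    hookLen (c+1) (fun i => if i = 0 then m+1 else m) (i+1) j = (m-j)+(c-1-i) := by
  unfold hookLen
  rw [legLen_eq _ _ _ _ (i+2) (c+1)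
    (by intro i'; constructor
        · rintro ⟨h1, h2, _⟩; omega
        · rintro ⟨h1, h2⟩
          refine ⟨h2, by omega, ?_⟩
          rw [if_neg (by omega)]; exact hj)]
  simp
  omega

end hooks

lemma left_eval (m c e : ℕ) :
    dimGL (c+1+e) (c+1) (fun i => if i = 0 then m+1 else m) =
      (ascQ (c+1+e) m * (((c:ℚ)+e+m+1)) / ascQ (c+2) m) *
        ∏ s ∈ Finset.range c, (ascQ (e+1+s) m / ascQ (1+s) m) := by
  unfold dimGL
  rw [Finset.prod_range_succ']
  simp only []
  have hrow0 : (∏ x ∈ Finset.range (if True then m + 1 else m),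
      ((c + 1 + e + x - 0 : ℕ) : ℚ) / (hookLen (c + 1) (fun i => if i = 0 then m + 1 else m) 0 x : ℚ))
      = ascQ (c+1+e) m * ((c:ℚ)+e+m+1) / ascQ (c+2) m := by
    rw [if_pos trivial, Finset.prod_range_succ, hookL_last m c]
    have h1 : (∏ x ∈ Finset.range m,
        ((c + 1 + e + x - 0 : ℕ) : ℚ) / (hookLen (c + 1) (fun i => if i = 0 then m + 1 else m) 0 x : ℚ))
        = (∏ x ∈ Finset.range m, (((c+1+e : ℕ):ℚ) + x)) / (∏ x ∈ Finset.range m, ((m+1-x+c : ℕ):ℚ)) := by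
      rw [← Finset.prod_div_distrib]
      apply Finset.prod_congr rfl
      intro x hx
      rw [Finset.mem_range] at hx
      rw [hookL_0 m c x hx]
      congr 1
      push_cast [Nat.sub_zero]
      ring
    have h2 : (∏ x ∈ Finset.range m, ((m+1-x+c : ℕ):ℚ)) = ascQ (c+2) m := by
      unfold ascQ
      apply prod_reflect_eq
      intro j hj
      rw [show m+1-(m-1-j)+c = c+2+j from by omega]
      push_cast; ring
    have h3 : (∏ x ∈ Finset.range m, (((c+1+e : ℕ):ℚ) + x)) = ascQ (c+1+e) m := rfl
    rw [h1, h2, h3,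
      show ((c+1+e+m-0 : ℕ):ℚ) = (c:ℚ)+e+m+1 from by push_cast [Nat.sub_zero]; ring]
    push_cast
    ring
  have hrows : (∏ x ∈ Finset.range c,
      ∏ j ∈ Finset.range (if x + 1 = 0 then m + 1 else m),
        ((c + 1 + e + j - (x + 1) : ℕ):ℚ) / (hookLen (c + 1) (fun i => if i = 0 then m + 1 else m) (x + 1) j : ℚ))
      = ∏ s ∈ Finset.range c, (ascQ (e+1+s) m / ascQ (1+s) m) := by
    apply prod_reflect_eq
    intro s hs
    rw [if_neg (by omega)]
    have hnum : (∏ j ∈ Finset.range m, ((c+1+e+j-(c-1-s+1) : ℕ):ℚ)) = ascQ (e+1+s) m := by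
      unfold ascQ
      apply Finset.prod_congr rfl
      intro j hj
      rw [show c+1+e+j-(c-1-s+1) = e+1+s+j from by omega]
      push_cast; ring
    have hden : (∏ j ∈ Finset.range m, ((hookLen (c+1) (fun i => if i = 0 then m+1 else m) (c-1-s+1) j : ℕ):ℚ)) = ascQ (1+s) m := by
      rw [Finset.prod_congr rfl (fun j hj => by
        rw [hookL_row m c (c-1-s) j (by omega) (Finset.mem_range.mp hj)])]
      unfold ascQ
      apply prod_reflect_eq
      intro j hj
      rw [show m-(m-1-j)+(c-1-(c-1-s)) = 1+s+j from by omega]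
      push_cast; ring
    rw [Finset.prod_div_distrib, hnum, hden]
  rw [hrow0, hrows]
  ring


section hooksR
variable (m c e : ℕ)

lemma hookR_top0 (i : ℕ) (hi : i < e) :
    hookLen (e+(c+1)) (fun i => if i < e then m+1 else if i < c+e then 1 else 0) i 0
      = (m+1)+(c+e-1-i) := by
  unfold hookLen
  rw [legLen_eq _ _ _ _ (i+1) (c+e)
    (by intro i'
        beta_reduce
        split_ifs with h1 h2 <;> omega)]
  beta_reduce
  rw [if_pos hi]
  omega

lemma hookR_top (i j : ℕ) (hi : i < e) (hj : j < m) :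
    hookLen (e+(c+1)) (fun i => if i < e then m+1 else if i < c+e then 1 else 0) i (j+1)
      = (m-j)+(e-1-i) := by
  unfold hookLen
  rw [legLen_eq _ _ _ _ (i+1) e
    (by intro i'
        beta_reduce
        split_ifs with h1 h2 <;> omega)]
  beta_reduce
  rw [if_pos hi]
  omega

lemma hookR_col (i : ℕ) (hi : i < c) :
    hookLen (e+(c+1)) (fun i => if i < e then m+1 else if i < c+e then 1 else 0) (e+i) 0
      = c-i := by
  unfold hookLen
  rw [legLen_eq _ _ _ _ (e+i+1) (c+e)
    (by intro i'
        beta_reduce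
        split_ifs with h1 h2 <;> omega)]
  beta_reduce
  rw [if_neg (by omega), if_pos (by omega)]
  omega

end hooksR

lemma tele (c : ℕ) : ∏ s ∈ Finset.range c, (((s:ℚ)+2)/((s:ℚ)+1)) = (c:ℚ)+1 := by
  induction c with
  | zero => simp
  | succ c ih =>
      rw [Finset.prod_range_succ, ih]
      have h : ((c:ℚ)+1) ≠ 0 := by positivity
      push_cast
      field_simp
      ring

lemma right_eval (m c e : ℕ) :
    dimGL (c+1+e) (c+1+e) (fun i => if i < e then m+1 else if i < c+e then 1 else 0)
      = ((c:ℚ)+1) * ∏ u ∈ Finset.range e,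
          (((c:ℚ)+2+u) * ascQ (c+3+u) m / (((m:ℚ)+c+1+u) * ascQ (1+u) m)) := by
  unfold dimGL
  rw [show c+1+e = e+(c+1) from by omega]
  rw [Finset.prod_range_add]
  simp only []
  have htail : (∏ x ∈ Finset.range (c + 1),
      ∏ j ∈ Finset.range (if e + x < e then m + 1 else if e + x < c + e then 1 else 0),
        ((e + (c + 1) + j - (e + x) : ℕ):ℚ) /
          (hookLen (e + (c + 1)) (fun i => if i < e then m + 1 else if i < c + e then 1 else 0) (e + x) j : ℚ))
      = (c:ℚ) + 1 := by
    rw [Finset.prod_range_succ]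
    rw [show (if e + c < e then m + 1 else if e + c < c + e then 1 else 0) = 0 from by
      rw [if_neg (by omega), if_neg (by omega)]]
    rw [Finset.prod_range_zero, mul_one]
    have hterm : ∀ x < c, (∏ j ∈ Finset.range (if e + x < e then m + 1 else if e + x < c + e then 1 else 0),
        ((e + (c + 1) + j - (e + x) : ℕ):ℚ) /
          (hookLen (e + (c + 1)) (fun i => if i < e then m + 1 else if i < c + e then 1 else 0) (e + x) j : ℚ))
        = ((c + 1 - x : ℕ):ℚ) / ((c - x : ℕ):ℚ) := by
      intro x hx
      rw [show (if e + x < e then m + 1 else if e + x < c + e then 1 else 0) = 1 from by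
        rw [if_neg (by omega), if_pos (by omega)]]
      rw [Finset.prod_range_one, hookR_col m c e x hx]
      congr 2
      omega
    rw [Finset.prod_congr rfl (fun x hx => hterm x (Finset.mem_range.mp hx))]
    rw [prod_reflect_eq c _ (fun s => ((s:ℚ)+2)/((s:ℚ)+1)) (by
      intro s hs
      rw [show c + 1 - (c-1-s) = s + 2 from by omega, show c - (c-1-s) = s + 1 from by omega]
      push_cast
      ring)]
    exact tele c
  have htop : (∏ x ∈ Finset.range e,
      ∏ j ∈ Finset.range (if x < e then m + 1 else if x < c + e then 1 else 0),
        ((e + (c + 1) + j - x : ℕ):ℚ) /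
          (hookLen (e + (c + 1)) (fun i => if i < e then m + 1 else if i < c + e then 1 else 0) x j : ℚ))
      = ∏ u ∈ Finset.range e,
          (((c:ℚ)+2+u) * ascQ (c+3+u) m / (((m:ℚ)+c+1+u) * ascQ (1+u) m)) := by
    apply prod_reflect_eq
    intro u hu
    rw [show (if e-1-u < e then m + 1 else if e-1-u < c + e then 1 else 0) = m + 1 from
      if_pos (by omega)]
    rw [Finset.prod_range_succ']
    rw [hookR_top0 m c e (e-1-u) (by omega)]
    have hnum : (∏ j ∈ Finset.range m,
        ((e + (c + 1) + (j+1) - (e-1-u) : ℕ):ℚ) /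
          (hookLen (e + (c + 1)) (fun i => if i < e then m + 1 else if i < c + e then 1 else 0) (e-1-u) (j+1) : ℚ))
        = ascQ (c+3+u) m / ascQ (1+u) m := by
      rw [Finset.prod_congr rfl (fun j hj => by
        rw [hookR_top m c e (e-1-u) j (by omega) (Finset.mem_range.mp hj)])]
      rw [Finset.prod_div_distrib]
      congr 1
      · unfold ascQ
        apply Finset.prod_congr rfl
        intro j hj
        rw [show e + (c+1) + (j+1) - (e-1-u) = c+3+u+j from by omega]
        push_cast
        ring
      · unfold ascQ
        apply prod_reflect_eq
        intro j hj
        rw [show m - (m-1-j) + (e-1-(e-1-u)) = 1+u+j from by omega]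
        push_cast
        ring
    rw [hnum]
    rw [show e + (c+1) + 0 - (e-1-u) = c+2+u from by omega]
    rw [show m + 1 + (c + e - 1 - (e-1-u)) = m+c+1+u from by omega]
    rw [div_mul_div_comm]
    push_cast
    ring
  rw [htail, htop]
  ring

lemma final_id (m c e : ℕ) :
    (ascQ (c+1+e) m * ((c:ℚ)+e+m+1) / ascQ (c+2) m) *
        ∏ s ∈ Finset.range c, (ascQ (e+1+s) m / ascQ (1+s) m)
      = ((c:ℚ)+1) * ∏ u ∈ Finset.range e,
          (((c:ℚ)+2+u) * ascQ (c+3+u) m / (((m:ℚ)+c+1+u) * ascQ (1+u) m)) := by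
  induction e with
  | zero =>
      rw [Finset.prod_range_zero, mul_one]
      rw [Finset.prod_congr rfl (fun s _ => by
        rw [show (0:ℕ)+1+s = 1+s from by omega, div_self (ascQ_ne (1+s) m (by omega))])]
      rw [Finset.prod_const_one, mul_one]
      have key := ascQ_key (c+1) m
      have h2 := ascQ_ne (c+2) m (by omega)
      rw [show c+1+1 = c+2 from rfl] at key
      rw [show c+1+0 = c+1 from rfl]
      field_simp
      push_cast at key ⊢
      linear_combination key
  | succ e ih =>
      rw [Finset.prod_range_succ, ← mul_assoc, ← ih]
      have hshift : ∏ s ∈ Finset.range c, (ascQ (e+1+1+s) m / ascQ (1+s) m)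
          = (∏ s ∈ Finset.range c, (ascQ (e+1+s) m / ascQ (1+s) m))
              * (ascQ (e+1+c) m / ascQ (e+1) m) := by
        have h1 : (∏ s ∈ Finset.range c, ascQ (e+1+s) m) * ascQ (e+1+c) m
            = (∏ s ∈ Finset.range c, ascQ (e+1+1+s) m) * ascQ (e+1) m :=
          calc (∏ s ∈ Finset.range c, ascQ (e+1+s) m) * ascQ (e+1+c) m
              = ∏ s ∈ Finset.range (c+1), ascQ (e+1+s) m :=
                (Finset.prod_range_succ _ c).symm
            _ = (∏ s ∈ Finset.range c, ascQ (e+1+(s+1)) m) * ascQ (e+1+0) m :=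
                Finset.prod_range_succ' _ c
            _ = (∏ s ∈ Finset.range c, ascQ (e+1+1+s) m) * ascQ (e+1) m := by
                exact congrArg (· * ascQ (e+1) m) (Finset.prod_congr rfl fun s _ => by
                  rw [show e+1+(s+1) = e+1+1+s from by omega])
        rw [Finset.prod_div_distrib, Finset.prod_div_distrib]
        have hne1 : (∏ s ∈ Finset.range c, ascQ (1+s) m) ≠ 0 :=
          Finset.prod_ne_zero_iff.mpr (fun s _ => ascQ_ne (1+s) m (by omega))
        have hne2 : ascQ (e+1) m ≠ 0 := ascQ_ne (e+1) m (by omega)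
        field_simp
        linear_combination -h1
      rw [hshift]
      rw [show c+1+(e+1) = c+2+e from by omega, show e+1+c = c+1+e from by omega]
      have key := ascQ_key (c+2+e) m
      rw [show c+2+e+1 = c+3+e from by omega] at key
      have h2 := ascQ_ne (c+2) m (by omega)
      have h3 := ascQ_ne (e+1) m (by omega)
      have h4 : ((m:ℚ)+c+1+e) ≠ 0 := by positivity
      have h5 := ascQ_ne (1+e) m (by omega)
      rw [show (1:ℕ)+e = e+1 from by omega] at h5
      rw [show (1:ℕ)+e = e+1 from by omega]
      field_simp
      push_cast at key ⊢
      have hne1 : (∏ x ∈ Finset.range c, ascQ (1+x) m) ≠ 0 :=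
        Finset.prod_ne_zero_iff.mpr (fun x _ => ascQ_ne (1+x) m (by omega))
      linear_combination ((∏ x ∈ Finset.range c, ascQ (e+1+x) m / ascQ (1+x) m)
        * ascQ (c+1+e) m * ((c:ℚ)+e+m+1)) * key

/-- `dim 𝕌^d_{(n,(n−1)^{k−1})} = dim 𝕌^d_{(n^{d−k},1^{k−1})}` for
`1 ≤ k ≤ d`, `n ≥ 1`. -/
theorem dimGL_nearRectangle_eq_complement (d n k : ℕ) (hn : 1 ≤ n) (hk : 1 ≤ k)
    (hkd : k ≤ d) :
    dimGL d k (fun i => if i = 0 then n else n - 1)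
      = dimGL d d (fun i => if i < d - k then n else if i < d - 1 then 1 else 0) := by
  obtain ⟨m, rfl⟩ : ∃ m, n = m + 1 := ⟨n - 1, by omega⟩
  obtain ⟨c, rfl⟩ : ∃ c, k = c + 1 := ⟨k - 1, by omega⟩
  obtain ⟨e, rfl⟩ : ∃ e, d = c + 1 + e := ⟨d - (c + 1), by omega⟩
  have h1 : (fun i => if i = 0 then m + 1 else m + 1 - 1)
      = (fun i => if i = 0 then m + 1 else m) := by
    funext i; simp
  have h2 : (fun i => if i < c + 1 + e - (c + 1) then m + 1 else if i < c + 1 + e - 1 then 1 else 0)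
      = (fun i : ℕ => if i < e then m + 1 else if i < c + e then 1 else 0) := by
    funext i
    rw [show c+1+e-(c+1) = e from by omega, show c+1+e-1 = c+e from by omega]
  rw [h1, h2, left_eval, right_eval, final_id]
end

section
/- With ℰ as above and Π_k = (1/k!) Σ_{i,i'} ε_{i_1…i_k} ε_{i'_1…i'_k} |i_1…i_k⟩⟨i'_1…i'_k| the projector onto the fully antisymmetric subspace of (ℂ^k)^{⊗k}, one has k · ℰ†Π_kℰ = |φ_k⟩⟨φ_k|, where the operators act on ℂ^k ⊗ ℂ^k via the identification of the target of ℰ tensored with one additional copy, and |φ_k⟩ = Σ_{i=1}^k |ii⟩ is the unnormalized maximally entangled vector. -/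
/-- Levi-Civita symbol: sign of `f : Fin k → Fin k` if it is a bijection, else `0`. -/
noncomputable def eps (k : ℕ) (f : Fin k → Fin k) : ℂ :=
  if h : Function.Bijective f then ((Equiv.Perm.sign (Equiv.ofBijective f h) : ℤ) : ℂ) else 0

/-- The map `ℰ ⊗ 𝟙 : ℂ^k ⊗ ℂ^k → (ℂ^k)^{⊗(k−1)} ⊗ ℂ^k ≅ (ℂ^k)^{⊗k}`, where
`ℰ|i⟩ = Σ_a (ε_{a₂…a_k i}/√((k−1)!)) |a₂…a_k⟩`: the output index `b : Fin k → Fin k` holds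
the `k−1` antisymmetric slots in positions `< k−1` and the untouched second tensor factor in
the last position. -/
noncomputable def Ehat (k : ℕ) : Matrix (Fin k → Fin k) (Fin k × Fin k) ℂ :=
  Matrix.of fun b p =>
    (eps k (fun t : Fin k => if (t : ℕ) = k - 1 then p.1 else b t) /
        (Real.sqrt ((k - 1).factorial) : ℂ)) *
      (if ∀ t : Fin k, (t : ℕ) = k - 1 → b t = p.2 then 1 else 0)

/-- The projector `Π_k = (1/k!) Σ ε_{i₁…i_k} ε_{i'₁…i'_k} |i₁…i_k⟩⟨i'₁…i'_k|` onto the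
fully antisymmetric subspace of `(ℂ^k)^{⊗k}`. -/
noncomputable def PiMat (k : ℕ) : Matrix (Fin k → Fin k) (Fin k → Fin k) ℂ :=
  Matrix.of fun b b' => eps k b * eps k b' / (k.factorial : ℂ)

lemma eps_coe (k : ℕ) (σ : Equiv.Perm (Fin k)) :
    eps k ⇑σ = ((Equiv.Perm.sign σ : ℤ) : ℂ) := by
  have h : Function.Bijective ⇑σ := σ.bijective
  have he : Equiv.ofBijective ⇑σ h = σ := Equiv.ext fun x => rfl
  rw [eps, dif_pos h, he]

lemma star_eps (k : ℕ) (f : Fin k → Fin k) : star (eps k f) = eps k f := by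
  unfold eps; split <;> simp

lemma sum_eps (k : ℕ) (F : (Fin k → Fin k) → ℂ) :
    ∑ b, eps k b * F b = ∑ σ : Equiv.Perm (Fin k), ((Equiv.Perm.sign σ : ℤ) : ℂ) * F ⇑σ := by
  rw [← Finset.sum_subset (Finset.subset_univ
      (Finset.univ.image (fun σ : Equiv.Perm (Fin k) => ⇑σ)))]
  · rw [Finset.sum_image (fun σ _ τ _ h => Equiv.coe_fn_injective h)]
    simp [eps_coe]
  · intro b _ hb
    have hnb : ¬ Function.Bijective b := fun h =>
      hb (Finset.mem_image.2 ⟨Equiv.ofBijective b h, Finset.mem_univ _, rfl⟩)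
    rw [eps, dif_neg hnb, zero_mul]

lemma card_fiber (k : ℕ) (hk : 1 ≤ k) (i v : Fin k) :
    (Finset.univ.filter (fun σ : Equiv.Perm (Fin k) => σ i = v)).card = (k-1).factorial := by
  have hsame : ∀ v w : Fin k,
      (Finset.univ.filter (fun σ : Equiv.Perm (Fin k) => σ i = v)).card
        = (Finset.univ.filter (fun σ : Equiv.Perm (Fin k) => σ i = w)).card := by
    intro v w
    refine Finset.card_bij' (fun σ _ => σ.trans (Equiv.swap v w))
      (fun σ _ => σ.trans (Equiv.swap v w)) ?_ ?_ ?_ ?_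
    · intro σ hσ
      simp only [Finset.mem_filter, Finset.mem_univ, true_and] at hσ ⊢
      simp [hσ]
    · intro σ hσ
      simp only [Finset.mem_filter, Finset.mem_univ, true_and] at hσ ⊢
      simp [hσ, Equiv.swap_apply_right]
    · intro σ _; ext x; simp
    · intro σ _; ext x; simp
  have htot : ∑ w : Fin k,
      (Finset.univ.filter (fun σ : Equiv.Perm (Fin k) => σ i = w)).card
        = Nat.factorial k := by
    rw [← Finset.card_eq_sum_card_fiberwise (f := fun σ : Equiv.Perm (Fin k) => σ i)
        (by intro σ _; exact Finset.mem_univ _)]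
    simp [Fintype.card_perm]
  have hmul : ∑ w : Fin k,
      (Finset.univ.filter (fun σ : Equiv.Perm (Fin k) => σ i = w)).card
        = k * (Finset.univ.filter (fun σ : Equiv.Perm (Fin k) => σ i = v)).card := by
    rw [Finset.sum_congr rfl (fun w _ => (hsame v w).symm)]
    simp [mul_comm]
  have hfact : Nat.factorial k = k * (k-1).factorial := by
    obtain ⟨m, rfl⟩ := Nat.exists_eq_add_of_le hk
    simp [Nat.factorial_succ, Nat.add_comm]
  refine Nat.eq_of_mul_eq_mul_left hk ?_
  rw [← hmul, htot, hfact]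

lemma Ssum (k : ℕ) (hk : 1 ≤ k) (p : Fin k × Fin k) :
    ∑ b, eps k b * Ehat k b p
      = if p.1 = p.2 then
          ((k-1).factorial : ℂ) / (Real.sqrt ((k-1).factorial) : ℂ) else 0 := by
  rw [sum_eps]
  have hik : k - 1 < k := by omega
  set i : Fin k := ⟨k-1, hik⟩ with hi
  have hival : (i : ℕ) = k - 1 := rfl
  by_cases hp : p.1 = p.2
  · rw [if_pos hp]
    have hterm : ∀ σ : Equiv.Perm (Fin k),
        ((Equiv.Perm.sign σ : ℤ) : ℂ) * Ehat k ⇑σ p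
          = if σ i = p.2 then (1:ℂ) / (Real.sqrt ((k-1).factorial) : ℂ) else 0 := by
      intro σ
      by_cases hσ : σ i = p.2
      · have hcond : ∀ t : Fin k, (t:ℕ) = k-1 → σ t = p.2 := by
          intro t ht
          have : t = i := Fin.ext ht
          rw [this]; exact hσ
        have hfun : (fun t : Fin k => if (t:ℕ) = k-1 then p.1 else σ t) = ⇑σ := by
          funext t
          by_cases ht : (t:ℕ) = k-1
          · have hti : t = i := Fin.ext ht
            rw [if_pos ht, hti, hσ, hp]
          · rw [if_neg ht]
        rw [if_pos hσ, Ehat, Matrix.of_apply, if_pos hcond, hfun, eps_coe,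
          mul_one, ← mul_div_assoc]
        congr 1
        rcases Int.units_eq_one_or (Equiv.Perm.sign σ) with h | h <;> rw [h] <;> norm_num
      · rw [if_neg hσ, Ehat, Matrix.of_apply, if_neg (fun h => hσ (h i hival)),
          mul_zero, mul_zero]
    rw [Finset.sum_congr rfl (fun σ _ => hterm σ), ← Finset.sum_filter,
      Finset.sum_const, card_fiber k hk i p.2, nsmul_eq_mul, mul_one_div]
  · rw [if_neg hp]
    apply Finset.sum_eq_zero
    intro σ _
    by_cases hσ : σ i = p.2
    · have hnb : ¬ Function.Bijective
          (fun t : Fin k => if (t:ℕ) = k-1 then p.1 else σ t) := by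
        intro hb
        have h1 : (fun t : Fin k => if (t:ℕ) = k-1 then p.1 else σ t) i = p.1 := by
          simp [hival]
        have hti : σ.symm p.1 ≠ i := by
          intro h
          apply hp
          have : σ (σ.symm p.1) = σ i := by rw [h]
          rw [Equiv.apply_symm_apply, hσ] at this
          exact this
        have htv : ((σ.symm p.1 : Fin k) : ℕ) ≠ k - 1 := fun h => hti (Fin.ext h)
        have h2 : (fun t : Fin k => if (t:ℕ) = k-1 then p.1 else σ t) (σ.symm p.1)
            = p.1 := by
          simp [htv]
        exact hti (hb.injective (h2.trans h1.symm))
      rw [Ehat, Matrix.of_apply, eps, dif_neg hnb]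
      simp
    · rw [Ehat, Matrix.of_apply, if_neg (fun h => hσ (h i hival)), mul_zero, mul_zero]

/-- `k · ℰ†Π_kℰ = |φ_k⟩⟨φ_k|` on `ℂ^k ⊗ ℂ^k`, where
`|φ_k⟩ = Σ_{i=1}^k |ii⟩`. -/
theorem E_dualization (k : ℕ) (hk : 1 ≤ k) :
    (k : ℂ) • ((Ehat k).conjTranspose * PiMat k * Ehat k)
      = Matrix.of fun p q : Fin k × Fin k =>
          (if p.1 = p.2 then (1 : ℂ) else 0) * (if q.1 = q.2 then 1 else 0) := by
  ext p q
  rw [Matrix.smul_apply, smul_eq_mul, Matrix.of_apply]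
  have hst : ∀ b, star (Ehat k b p) = Ehat k b p := by
    intro b
    simp [Ehat, star_eps, apply_ite (star : ℂ → ℂ), Complex.star_def, Complex.conj_ofReal]
  have key : ((Ehat k).conjTranspose * PiMat k * Ehat k) p q
      = (∑ b, eps k b * Ehat k b p) * (∑ b', eps k b' * Ehat k b' q)
          / (k.factorial : ℂ) := by
    calc ((Ehat k).conjTranspose * PiMat k * Ehat k) p q
        = ∑ b', (∑ b, Ehat k b p * (eps k b * eps k b' / (k.factorial:ℂ))) * Ehat k b' q := by
          simp only [Matrix.mul_apply, Matrix.conjTranspose_apply, PiMat, Matrix.of_apply, hst]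
      _ = ∑ b', ∑ b, Ehat k b p * (eps k b * eps k b' / (k.factorial:ℂ)) * Ehat k b' q :=
          Finset.sum_congr rfl fun b' _ => Finset.sum_mul _ _ _
      _ = (∑ b, eps k b * Ehat k b p) * (∑ b', eps k b' * Ehat k b' q)
            / (k.factorial : ℂ) := by
          rw [Finset.sum_mul_sum, Finset.sum_div, Finset.sum_comm]
          refine Finset.sum_congr rfl fun b' _ => ?_
          rw [Finset.sum_div]
          refine Finset.sum_congr rfl fun b _ => ?_
          ring
  rw [key, Ssum k hk p, Ssum k hk q]
  have hf0 : ((k-1).factorial : ℂ) ≠ 0 := by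
    exact_mod_cast Nat.cast_ne_zero.mpr (Nat.factorial_ne_zero _)
  have hs0 : ((Real.sqrt ((k-1).factorial) : ℝ) : ℂ) ≠ 0 := by
    rw [Complex.ofReal_ne_zero]
    positivity
  have hs : ((Real.sqrt ((k-1).factorial) : ℝ) : ℂ)
      * ((Real.sqrt ((k-1).factorial) : ℝ) : ℂ) = ((k-1).factorial : ℂ) := by
    rw [← Complex.ofReal_mul, Real.mul_self_sqrt (by positivity)]
    push_cast
    ring
  have hkfc : (k.factorial : ℂ) = (k : ℂ) * ((k-1).factorial : ℂ) := by
    have hfact : Nat.factorial k = k * (k-1).factorial := by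
      obtain ⟨m, rfl⟩ := Nat.exists_eq_add_of_le hk
      simp [Nat.factorial_succ, Nat.add_comm]
    exact_mod_cast congrArg (Nat.cast : ℕ → ℂ) hfact
  have hk0 : (k : ℂ) ≠ 0 := by
    exact_mod_cast Nat.cast_ne_zero.mpr (by omega)
  split_ifs with h1 h2 h2 <;> simp only [one_mul, mul_one, mul_zero, zero_mul]
  · have hAA : ((k-1).factorial : ℂ) / (Real.sqrt ((k-1).factorial) : ℂ)
        * (((k-1).factorial : ℂ) / (Real.sqrt ((k-1).factorial) : ℂ))
        = ((k-1).factorial : ℂ) := by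
      rw [div_mul_div_comm, hs, mul_div_assoc, div_self hf0, mul_one]
    rw [hAA, hkfc]
    field_simp
  · simp
  · simp
  · simp
end
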